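/- Let P and Q be probability measures on a measurable space with midpoint mixture M = (1/2)(P + Q). If KL(P ‖ M) + KL(Q ‖ M) = 2·log 2 (i.e. the Jensen–Shannon divergence attains its maximal value log 2), then P and Q are mutually singular. -/

import Mathlib

open MeasureTheory Real
open scoped ENNReal Classical

/-- Kullback–Leibler divergence: `∫ log (dP/dQ) dP` if `P ≪ Q`, and `+∞` otherwise. -/
noncomputable def klDiv {α : Type*} [MeasurableSpace α] (P Q : Measure α) : EReal :=
  if P ≪ Q then ((∫ x, Real.log ((P.rnDeriv Q) x).toReal ∂P : ℝ) : EReal) else ⊤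

section aux

variable {α : Type*} [MeasurableSpace α]

lemma aux_ac (P Q : Measure α) : P ≪ (2⁻¹ : ℝ≥0∞) • (P + Q) := by
  refine Measure.AbsolutelyContinuous.mk fun s hs h0 => ?_
  simp only [Measure.smul_apply, smul_eq_mul] at h0
  rcases mul_eq_zero.mp h0 with h | h
  · simp at h
  · have hle : P s ≤ (P + Q) s := by simp [Measure.add_apply]
    exact le_antisymm (h ▸ hle) zero_le

lemma aux_bound (P Q : Measure α) [IsProbabilityMeasure P] [IsProbabilityMeasure Q] :
    P.rnDeriv ((2⁻¹ : ℝ≥0∞) • (P + Q)) ≤ᵐ[P + Q] 2 := by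
  have h2 : P.rnDeriv ((2⁻¹ : ℝ≥0∞) • (P + Q)) =ᵐ[P + Q]
      ((2⁻¹ : ℝ≥0∞)⁻¹ : ℝ≥0∞) • P.rnDeriv (P + Q) :=
    Measure.rnDeriv_smul_right_of_ne_top P (P + Q) (by norm_num) (by norm_num)
  have hle : P.rnDeriv (P + Q) ≤ᵐ[P + Q] 1 :=
    Measure.rnDeriv_le_one_of_le (Measure.le_add_right le_rfl)
  filter_upwards [h2, hle] with a ha hb
  rw [ha]
  simp only [Pi.smul_apply, smul_eq_mul]
  calc (2⁻¹ : ℝ≥0∞)⁻¹ * P.rnDeriv (P + Q) a ≤ (2⁻¹ : ℝ≥0∞)⁻¹ * 1 := by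
        exact mul_le_mul_right hb _
    _ = 2 := by norm_num

lemma aux_le (P Q : Measure α) [IsProbabilityMeasure P] [IsProbabilityMeasure Q] :
    klDiv P ((2⁻¹ : ℝ≥0∞) • (P + Q)) ≤ ((Real.log 2 : ℝ) : EReal) := by
  rw [klDiv, if_pos (aux_ac P Q)]
  set M := (2⁻¹ : ℝ≥0∞) • (P + Q) with hM
  have hub : ∀ᵐ a ∂P, Real.log ((P.rnDeriv M a).toReal) ≤ Real.log 2 := by
    have hb : ∀ᵐ a ∂P, P.rnDeriv M a ≤ 2 :=
      (Measure.absolutelyContinuous_of_le (Measure.le_add_right le_rfl)).ae_le (aux_bound P Q)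
    filter_upwards [hb] with a ha
    have h1 : (P.rnDeriv M a).toReal ≤ 2 := by
      have := ENNReal.toReal_mono (by norm_num) ha
      simpa using this
    rcases eq_or_lt_of_le (ENNReal.toReal_nonneg : (0:ℝ) ≤ (P.rnDeriv M a).toReal) with h0 | h0
    · rw [← h0, Real.log_zero]
      exact le_of_lt (Real.log_pos one_lt_two)
    · exact Real.log_le_log h0 h1
  by_cases hint : Integrable (fun a => Real.log ((P.rnDeriv M a).toReal)) P
  · have := integral_mono_ae hint (integrable_const (Real.log 2)) hub
    simp only [integral_const, measure_univ, probReal_univ, ENNReal.toReal_one, smul_eq_mul, one_mul] at this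
    exact_mod_cast this
  · rw [integral_undef hint]
    exact_mod_cast le_of_lt (Real.log_pos one_lt_two)

end aux

theorem mutuallySingular_of_kl_midpoint_sum_eq_two_log_two {α : Type*} [MeasurableSpace α]
    (P Q : Measure α) [IsProbabilityMeasure P] [IsProbabilityMeasure Q]
    (M : Measure α) (hM : M = (2⁻¹ : ℝ≥0∞) • (P + Q))
    (h : klDiv P M + klDiv Q M = ((2 * Real.log 2 : ℝ) : EReal)) :
    P ⟂ₘ Q := by
  subst hM
  set M := (2⁻¹ : ℝ≥0∞) • (P + Q) with hM
  have hPM : P ≪ M := aux_ac P Q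
  have hQM : Q ≪ M := by rw [hM, add_comm P Q]; exact aux_ac Q P
  -- extract real values
  set x := ∫ a, Real.log ((P.rnDeriv M a).toReal) ∂P with hx
  set y := ∫ a, Real.log ((Q.rnDeriv M a).toReal) ∂Q with hy
  have hkP : klDiv P M = ((x : ℝ) : EReal) := by rw [klDiv, if_pos hPM]
  have hkQ : klDiv Q M = ((y : ℝ) : EReal) := by rw [klDiv, if_pos hQM]
  have hsum : x + y = 2 * Real.log 2 := by
    rw [hkP, hkQ, ← EReal.coe_add] at h
    exact_mod_cast h
  have hxle : x ≤ Real.log 2 := by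
    have := aux_le P Q
    rw [← hM, hkP] at this
    exact_mod_cast this
  have hyle : y ≤ Real.log 2 := by
    have := aux_le Q P
    rw [add_comm Q P, ← hM, hkQ] at this
    exact_mod_cast this
  have hxeq : x = Real.log 2 := by linarith
  -- integrability
  have hub : ∀ᵐ a ∂P, Real.log ((P.rnDeriv M a).toReal) ≤ Real.log 2 := by
    have hb : ∀ᵐ a ∂P, P.rnDeriv M a ≤ 2 :=
      (Measure.absolutelyContinuous_of_le (Measure.le_add_right le_rfl)).ae_le (aux_bound P Q)
    filter_upwards [hb] with a ha
    have h1 : (P.rnDeriv M a).toReal ≤ 2 := by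
      have := ENNReal.toReal_mono (by norm_num) ha
      simpa using this
    rcases eq_or_lt_of_le (ENNReal.toReal_nonneg : (0:ℝ) ≤ (P.rnDeriv M a).toReal) with h0 | h0
    · rw [← h0, Real.log_zero]; exact le_of_lt (Real.log_pos one_lt_two)
    · exact Real.log_le_log h0 h1
  have hint : Integrable (fun a => Real.log ((P.rnDeriv M a).toReal)) P := by
    by_contra hc
    rw [hx, integral_undef hc] at hxeq
    exact (Real.log_pos one_lt_two).ne hxeq
  -- equality a.e.
  have h0 : ∫ a, (Real.log 2 - Real.log ((P.rnDeriv M a).toReal)) ∂P = 0 := by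
    rw [integral_sub (integrable_const _) hint]
    simp [← hx, hxeq]
  have hnn : 0 ≤ᵐ[P] (fun a => Real.log 2 - Real.log ((P.rnDeriv M a).toReal)) := by
    filter_upwards [hub] with a ha
    simpa using ha
  have hae0 : (fun a => Real.log 2 - Real.log ((P.rnDeriv M a).toReal)) =ᵐ[P] 0 :=
    (integral_eq_zero_iff_of_nonneg_ae hnn ((integrable_const _).sub hint)).mp h0
  have hlog : ∀ᵐ a ∂P, Real.log ((P.rnDeriv M a).toReal) = Real.log 2 := by
    filter_upwards [hae0] with a ha
    have : Real.log 2 - Real.log ((P.rnDeriv M a).toReal) = 0 := ha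
    linarith
  -- deduce rnDeriv values
  have hmem : ∀ᵐ a ∂P, (P.rnDeriv M a).toReal = 2 := by
    filter_upwards [hlog] with a ha
    have hpos : 0 < (P.rnDeriv M a).toReal := by
      rcases eq_or_lt_of_le (ENNReal.toReal_nonneg : (0:ℝ) ≤ (P.rnDeriv M a).toReal) with h0 | h0
      · rw [← h0, Real.log_zero] at ha
        exact absurd ha.symm (Real.log_pos one_lt_two).ne'
      · exact h0
    have := congrArg Real.exp ha
    rwa [Real.exp_log hpos, Real.exp_log (by norm_num)] at this
  -- relate to rnDeriv w.r.t. P+Q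
  have h2 : P.rnDeriv M =ᵐ[P + Q] ((2⁻¹ : ℝ≥0∞)⁻¹ : ℝ≥0∞) • P.rnDeriv (P + Q) :=
    Measure.rnDeriv_smul_right_of_ne_top P (P + Q) (by norm_num) (by norm_num)
  have hPν : P ≪ P + Q := Measure.absolutelyContinuous_of_le (Measure.le_add_right le_rfl)
  have h2P : ∀ᵐ a ∂P, P.rnDeriv M a = 2 * P.rnDeriv (P + Q) a := by
    filter_upwards [hPν.ae_le h2] with a ha
    rw [ha]
    simp only [Pi.smul_apply, smul_eq_mul]
    norm_num
  have hfin : ∀ᵐ a ∂P, P.rnDeriv (P + Q) a ≠ ∞ :=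
    hPν.ae_le (Measure.rnDeriv_ne_top P (P + Q))
  have hf1 : ∀ᵐ a ∂P, P.rnDeriv (P + Q) a = 1 := by
    filter_upwards [hmem, h2P, hfin] with a hm hp hf
    rw [hp] at hm
    rw [ENNReal.toReal_mul] at hm
    simp only [ENNReal.toReal_ofNat] at hm
    have : (P.rnDeriv (P + Q) a).toReal = 1 := by linarith
    exact (ENNReal.toReal_eq_one_iff _).mp this
  -- sum of rnDerivs = 1
  have hadd : P.rnDeriv (P + Q) + Q.rnDeriv (P + Q) =ᵐ[P + Q] 1 := by
    have h1 : (P + Q).rnDeriv (P + Q) =ᵐ[P + Q] P.rnDeriv (P + Q) + Q.rnDeriv (P + Q) :=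
      Measure.rnDeriv_add P Q (P + Q)
    have h2 : (P + Q).rnDeriv (P + Q) =ᵐ[P + Q] fun _ => 1 :=
      Measure.rnDeriv_self (P + Q)
    filter_upwards [h1, h2] with a ha hb
    simp only [Pi.add_apply, Pi.one_apply] at *
    rw [← ha, hb]
  have hg0 : ∀ᵐ a ∂P, Q.rnDeriv (P + Q) a = 0 := by
    filter_upwards [hf1, hPν.ae_le hadd] with a ha hb
    simp only [Pi.add_apply, Pi.one_apply] at hb
    rw [ha] at hb
    have : (1 : ℝ≥0∞) + Q.rnDeriv (P + Q) a = 1 + 0 := by simpa using hb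
    exact (ENNReal.add_right_inj (by norm_num)).mp this
  -- construct the singularity
  have hmeas : MeasurableSet {a | Q.rnDeriv (P + Q) a ≠ 0} :=
    (Measure.measurable_rnDeriv Q (P + Q) (measurableSet_singleton 0)).compl
  refine ⟨{a | Q.rnDeriv (P + Q) a ≠ 0}, hmeas, ae_iff.mp hg0, ?_⟩
  have hQν : Q ≪ P + Q := Measure.absolutelyContinuous_of_le (Measure.le_add_left le_rfl)
  have hQw : (P + Q).withDensity (Q.rnDeriv (P + Q)) = Q :=
    Measure.withDensity_rnDeriv_eq Q (P + Q) hQν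
  calc Q {a | Q.rnDeriv (P + Q) a ≠ 0}ᶜ
      = ((P + Q).withDensity (Q.rnDeriv (P + Q))) {a | Q.rnDeriv (P + Q) a ≠ 0}ᶜ := by
        rw [hQw]
    _ = ∫⁻ a in {a | Q.rnDeriv (P + Q) a ≠ 0}ᶜ, Q.rnDeriv (P + Q) a ∂(P + Q) :=
        withDensity_apply _ hmeas.compl
    _ = ∫⁻ _ in {a | Q.rnDeriv (P + Q) a ≠ 0}ᶜ, 0 ∂(P + Q) :=
        setLIntegral_congr_fun hmeas.compl (fun a ha => by simpa using ha)
    _ = 0 := by simp
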